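/- Corollary to Thirring's inequality (Corollary 3.5, quadratic form version): Let A be a bounded self-adjoint operator on a complex Hilbert space H, let ψ ∈ H with ‖ψ‖ = 1 and A ψ = E₁ ψ for some E₁ ∈ ℝ, and let E₂ ∈ ℝ be such that re⟨φ, A φ⟩ ≥ E₂ ‖φ‖² for every φ ∈ H with ⟨ψ, φ⟩ = 0. Let V be a bounded self-adjoint operator on H which is positive and invertible with bounded inverse V⁻¹. Then for every φ ∈ H with ‖φ‖ = 1, re⟨φ, (A + V) φ⟩ ≥ min(E₁ + (re⟨ψ, V⁻¹ ψ⟩)⁻¹, E₂). -/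

import Mathlib

open scoped InnerProductSpace

section Aux

variable {H : Type*} [NormedAddCommGroup H] [InnerProductSpace ℂ H] [CompleteSpace H]

/-- Cauchy–Schwarz for the positive sesquilinear form `(x, y) ↦ ⟪x, V y⟫`. -/
lemma pos_op_cauchy_schwarz (V : H →L[ℂ] H) (hV : IsSelfAdjoint V)
    (hpos : ∀ x : H, 0 ≤ (⟪x, V x⟫_ℂ).re) (x y : H) :
    ‖⟪x, V y⟫_ℂ‖ * ‖⟪y, V x⟫_ℂ‖ ≤ (⟪x, V x⟫_ℂ).re * (⟪y, V y⟫_ℂ).re := by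
  have hsym : ∀ a b : H, ⟪V a, b⟫_ℂ = ⟪a, V b⟫_ℂ := fun a b => hV.isSymmetric a b
  letI c : PreInnerProductSpace.Core ℂ H :=
    { inner := fun a b => ⟪a, V b⟫_ℂ
      conj_inner_symm := by
        intro a b
        show (starRingEnd ℂ) ⟪b, V a⟫_ℂ = ⟪a, V b⟫_ℂ
        rw [inner_conj_symm]
        exact hsym a b
      re_inner_nonneg := hpos
      add_left := by
        intro a b z
        show ⟪a + b, V z⟫_ℂ = ⟪a, V z⟫_ℂ + ⟪b, V z⟫_ℂ
        rw [inner_add_left]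
      smul_left := by
        intro a b r
        show ⟪r • a, V b⟫_ℂ = (starRingEnd ℂ) r * ⟪a, V b⟫_ℂ
        rw [inner_smul_left] }
  exact InnerProductSpace.Core.inner_mul_inner_self_le (𝕜 := ℂ) (F := H) (c := c) x y

end Aux

/-- **Corollary to Thirring's inequality** (Corollary 3.5, quadratic form version).
Let `A` be a bounded self-adjoint operator, `ψ` a normalized eigenvector of `A`
with eigenvalue `E₁`, such that `re⟨φ, A φ⟩ ≥ E₂‖φ‖²` for every `φ ⊥ ψ`.
Let `V` be a bounded self-adjoint, positive operator which is invertible with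
bounded inverse `W = V⁻¹`.  Then for every unit vector `φ`:
`re⟨φ, (A + V) φ⟩ ≥ min (E₁ + (re⟨ψ, V⁻¹ ψ⟩)⁻¹) E₂`. -/
theorem thirring_corollary
    {H : Type*} [NormedAddCommGroup H] [InnerProductSpace ℂ H] [CompleteSpace H]
    (A : H →L[ℂ] H) (hA : IsSelfAdjoint A)
    (ψ : H) (hψ : ‖ψ‖ = 1) (E₁ E₂ : ℝ)
    (hgs : A ψ = (E₁ : ℂ) • ψ)
    (hE₂ : ∀ φ : H, ⟪ψ, φ⟫_ℂ = 0 → E₂ * ‖φ‖ ^ 2 ≤ (⟪φ, A φ⟫_ℂ).re)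
    (V W : H →L[ℂ] H) (hV : IsSelfAdjoint V)
    (hpos : ∀ x : H, 0 ≤ (⟪x, V x⟫_ℂ).re)
    (hVW : V ∘L W = ContinuousLinearMap.id ℂ H)
    (hWV : W ∘L V = ContinuousLinearMap.id ℂ H)
    (φ : H) (hφ : ‖φ‖ = 1) :
    min (E₁ + ((⟪ψ, W ψ⟫_ℂ).re)⁻¹) E₂ ≤ (⟪φ, (A + V) φ⟫_ℂ).re := by
  have hVsym : ∀ x y : H, ⟪V x, y⟫_ℂ = ⟪x, V y⟫_ℂ := fun x y => hV.isSymmetric x y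
  have hAsym : ∀ x y : H, ⟪A x, y⟫_ℂ = ⟪x, A y⟫_ℂ := fun x y => hA.isSymmetric x y
  have hVWψ : V (W ψ) = ψ := by
    have := congrArg (fun T : H →L[ℂ] H => T ψ) hVW
    simpa using this
  have hψψ : ⟪ψ, ψ⟫_ℂ = 1 := by
    rw [inner_self_eq_norm_sq_to_K, hψ]; norm_num
  set a : ℂ := ⟪ψ, φ⟫_ℂ with ha
  set s : ℝ := ‖a‖ ^ 2 with hs
  set t : ℝ := (⟪ψ, W ψ⟫_ℂ).re with ht
  have hret : (⟪W ψ, ψ⟫_ℂ).re = t := by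
    rw [ht, ← inner_conj_symm, Complex.conj_re]
  have hWVW : (⟪W ψ, V (W ψ)⟫_ℂ).re = t := by
    rw [hVWψ]; exact hret
  -- t > 0 via Cauchy-Schwarz with ψ and Wψ
  have htpos : 0 < t := by
    have hcs := pos_op_cauchy_schwarz V hV hpos ψ (W ψ)
    rw [hVWψ, hψψ] at hcs
    have h2 : ⟪W ψ, V ψ⟫_ℂ = 1 := by
      rw [← hVsym, hVWψ, hψψ]
    rw [h2, hret] at hcs
    simp only [norm_one, one_mul] at hcs
    nlinarith [hpos ψ]
  -- Thirring bound for V part: s ≤ t * re⟪φ, Vφ⟫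
  have hVbound : s ≤ t * (⟪φ, V φ⟫_ℂ).re := by
    have hcs := pos_op_cauchy_schwarz V hV hpos (W ψ) φ
    have h1 : ⟪W ψ, V φ⟫_ℂ = a := by
      rw [← hVsym, hVWψ]
    have h2 : ⟪φ, V (W ψ)⟫_ℂ = ⟪φ, ψ⟫_ℂ := by rw [hVWψ]
    rw [h1, h2, hWVW] at hcs
    have h3 : ‖⟪φ, ψ⟫_ℂ‖ = ‖a‖ := by
      rw [ha]; exact norm_inner_symm φ ψ
    rw [h3] at hcs
    calc s = ‖a‖ * ‖a‖ := sq ‖a‖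
    _ ≤ t * (⟪φ, V φ⟫_ℂ).re := hcs
  -- decomposition
  set φp : H := φ - a • ψ with hφp
  have hperp : ⟪ψ, φp⟫_ℂ = 0 := by
    rw [hφp, inner_sub_right, inner_smul_right, hψψ, mul_one, ha, sub_self]
  have hperp' : ⟪φp, ψ⟫_ℂ = 0 := by
    rw [← inner_conj_symm, hperp, map_zero]
  have hφeq : φ = a • ψ + φp := by rw [hφp]; abel
  -- Pythagoras: ‖φp‖² = 1 - s
  have hpyth : ‖φp‖ ^ 2 = 1 - s := by
    have horth : ⟪a • ψ, φp⟫_ℂ = 0 := by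
      rw [inner_smul_left, hperp, mul_zero]
    have h := norm_add_sq_eq_norm_sq_add_norm_sq_of_inner_eq_zero (a • ψ) φp horth
    rw [← hφeq, hφ] at h
    have hnormaψ : ‖a • ψ‖ * ‖a • ψ‖ = s := by
      rw [norm_smul, hψ, mul_one, hs]; ring
    rw [sq]
    nlinarith [h, hnormaψ]
  have hs1 : s ≤ 1 := by nlinarith [sq_nonneg ‖φp‖]
  have hs0 : 0 ≤ s := sq_nonneg _
  -- A part
  have hAψφp : ⟪ψ, A φp⟫_ℂ = 0 := by
    rw [← hAsym, hgs, inner_smul_left, hperp, mul_zero]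
  have hφpAψ : ⟪φp, A ψ⟫_ℂ = 0 := by
    rw [hgs, inner_smul_right, hperp', mul_zero]
  have hψAψ : ⟪ψ, A ψ⟫_ℂ = (E₁ : ℂ) := by
    rw [hgs, inner_smul_right, hψψ, mul_one]
  have hca : (starRingEnd ℂ) a * a * (E₁ : ℂ) = ((E₁ * s : ℝ) : ℂ) := by
    rw [mul_comm ((starRingEnd ℂ) a) a, Complex.mul_conj, Complex.normSq_eq_norm_sq,
      ← hs]
    push_cast
    ring
  have hAeq : ⟪φ, A φ⟫_ℂ = ((E₁ * s : ℝ) : ℂ) + ⟪φp, A φp⟫_ℂ := by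
    conv_lhs => rw [hφeq]
    rw [map_add, map_smul, inner_add_left, inner_add_right, inner_add_right,
      inner_smul_left, inner_smul_left, inner_smul_right, inner_smul_right,
      hψAψ, hAψφp, hφpAψ, ← hca]
    ring
  have hApart : (⟪φ, A φ⟫_ℂ).re = E₁ * s + (⟪φp, A φp⟫_ℂ).re := by
    rw [hAeq, Complex.add_re, Complex.ofReal_re]
  have hAlow : E₂ * (1 - s) ≤ (⟪φp, A φp⟫_ℂ).re := by
    have := hE₂ φp hperp
    rwa [hpyth] at this
  -- combine
  have hsum : (⟪φ, (A + V) φ⟫_ℂ).re = (⟪φ, A φ⟫_ℂ).re + (⟪φ, V φ⟫_ℂ).re := by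
    simp [inner_add_right]
  rw [hsum, hApart]
  have hmin1 : min (E₁ + t⁻¹) E₂ ≤ E₁ + t⁻¹ := min_le_left _ _
  have hmin2 : min (E₁ + t⁻¹) E₂ ≤ E₂ := min_le_right _ _
  have htinv : t * t⁻¹ = 1 := mul_inv_cancel₀ (ne_of_gt htpos)
  nlinarith [mul_le_mul_of_nonneg_left hmin1 hs0,
    mul_le_mul_of_nonneg_left hmin2 (by linarith : (0:ℝ) ≤ 1 - s),
    mul_pos htpos (by positivity : (0:ℝ) < t⁻¹)]
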